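/- The q-ordering map O_q satisfies O_q(∂p/∂z̄_j) = ad(a_j)(O_q(p)) and O_q(∂p/∂z_j) = -ad(a_j⁺)(O_q(p)) for every polynomial p, where ad(x)(w) = xw - wx. -/

import Mathlib

open MvPolynomial

lemma listpull_aux {R : Type*} [Monoid R] : ∀ (n : ℕ) (f : Fin n → R) (j : Fin n) (y : R),
    (∀ k, Commute y (f k)) →
    (List.ofFn (Function.update f j (y * f j))).prod = y * (List.ofFn f).prod := by
  intro n
  induction n with
  | zero => exact fun f j => j.elim0
  | succ n ih =>
    intro f j y hy
    induction j using Fin.cases with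
    | zero =>
      rw [List.ofFn_succ, List.ofFn_succ, Function.update_self]
      have : (fun i : Fin n => Function.update f 0 (y * f 0) i.succ) = fun i : Fin n => f i.succ := by
        funext k; simp [Function.update_of_ne (Fin.succ_ne_zero k)]
      rw [this]
      simp [List.prod_cons, mul_assoc]
    | succ i =>
      rw [List.ofFn_succ, List.ofFn_succ, Function.update_of_ne (Fin.succ_ne_zero i).symm]
      have h1 : (fun k : Fin n => Function.update f i.succ (y * f i.succ) k.succ)
          = Function.update (fun k : Fin n => f k.succ) i (y * (fun k : Fin n => f k.succ) i) := by
        funext k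
        rcases eq_or_ne k i with rfl | hk
        · simp
        · simp [Function.update_of_ne hk, Function.update_of_ne (fun h => hk (Fin.succ_injective _ h))]
      rw [h1, List.prod_cons, List.prod_cons,
        ih (fun k : Fin n => f k.succ) i y (fun k => hy k.succ),
        ← mul_assoc, ← (hy 0).eq, mul_assoc]

theorem stmt3 {W : Type*} [Ring W] [Algebra ℂ W] (d : ℕ) (a ap : Fin d → W)
    (hccr : ∀ j k, a j * ap k - ap k * a j = if j = k then 1 else 0)
    (haa : ∀ j k, a j * a k = a k * a j)
    (hpp : ∀ j k, ap j * ap k = ap k * ap j)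
    (q : ℝ) (hq : q ∈ Set.Icc (0 : ℝ) 1)
    (M Mp : Fin d → Module.End ℂ W)
    (hM : ∀ j w, M j w = ((1 - q : ℝ) : ℂ) • (a j * w) + (q : ℂ) • (w * a j))
    (hMp : ∀ j w, Mp j w = (q : ℂ) • (ap j * w) + ((1 - q : ℝ) : ℂ) • (w * ap j))
    (O : MvPolynomial (Fin d ⊕ Fin d) ℂ →ₗ[ℂ] W)
    (hO : ∀ m : (Fin d ⊕ Fin d) →₀ ℕ,
      O (monomial m 1) =
        ((List.ofFn fun j : Fin d => M j ^ m (Sum.inl j)).prod *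
          (List.ofFn fun j : Fin d => Mp j ^ m (Sum.inr j)).prod) 1) :
    ∀ (p : MvPolynomial (Fin d ⊕ Fin d) ℂ) (j : Fin d),
      O (pderiv (Sum.inr j) p) = a j * O p - O p * a j ∧
      O (pderiv (Sum.inl j) p) = -(ap j * O p - O p * ap j) := by
  have hccr' : ∀ j k, a j * ap k = ap k * a j + if j = k then 1 else 0 := by
    intro j k; rw [← hccr j k]; abel
  have hccr2 : ∀ j k, ap k * a j = a j * ap k - if j = k then 1 else 0 := by
    intro j k; rw [← hccr j k]; abel
  have swapA_M : ∀ j k (w : W), a j * M k w - M k w * a j = M k (a j * w - w * a j) := by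
    intro j k w
    simp only [hM, mul_add, add_mul, mul_smul_comm, smul_mul_assoc, mul_sub, sub_mul,
      smul_sub, mul_assoc]
    rw [show a j * (a k * w) = a k * (a j * w) by rw [← mul_assoc, haa j k, mul_assoc],
      show w * (a k * a j) = w * (a j * a k) by rw [haa k j]]
    module
  have swapA_Mp : ∀ j k (w : W), a j * Mp k w - Mp k w * a j
      = Mp k (a j * w - w * a j) + if j = k then w else 0 := by
    intro j k w
    simp only [hMp, mul_add, add_mul, mul_smul_comm, smul_mul_assoc, mul_sub, sub_mul,
      smul_sub, mul_assoc]
    rw [show a j * (ap k * w) = ap k * (a j * w) + if j = k then w else 0 by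
        rw [← mul_assoc, hccr' j k, add_mul, mul_assoc]; split <;> simp,
      show w * (ap k * a j) = w * (a j * ap k) - if j = k then w else 0 by
        rw [hccr' j k, mul_add]; split <;> simp]
    split <;> module
  have swapB_Mp : ∀ j k (w : W), ap j * Mp k w - Mp k w * ap j
      = Mp k (ap j * w - w * ap j) := by
    intro j k w
    simp only [hMp, mul_add, add_mul, mul_smul_comm, smul_mul_assoc, mul_sub, sub_mul,
      smul_sub, mul_assoc]
    rw [show ap j * (ap k * w) = ap k * (ap j * w) by rw [← mul_assoc, hpp j k, mul_assoc],
      show w * (ap k * ap j) = w * (ap j * ap k) by rw [hpp k j]]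
    module
  have swapB_M : ∀ j k (w : W), ap j * M k w - M k w * ap j
      = M k (ap j * w - w * ap j) - if j = k then w else 0 := by
    intro j k w
    simp only [hM, mul_add, add_mul, mul_smul_comm, smul_mul_assoc, mul_sub, sub_mul,
      smul_sub, mul_assoc]
    rw [show ap j * (a k * w) = a k * (ap j * w) - if k = j then w else 0 by
        rw [← mul_assoc, hccr2 k j, sub_mul, mul_assoc]; split <;> simp,
      show w * (a k * ap j) = w * (ap j * a k) + if k = j then w else 0 by
        rw [hccr' k j, mul_add]; split <;> simp,
      show (if j = k then w else (0:W)) = if k = j then w else 0 by simp [eq_comm]]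
    split <;> module
  have cMM : ∀ j k, Commute (M j) (M k) := by
    intro j k
    apply LinearMap.ext; intro w
    rw [Module.End.mul_apply, Module.End.mul_apply]
    simp only [hM, mul_add, add_mul, mul_smul_comm, smul_mul_assoc, smul_add, smul_smul,
      mul_assoc]
    rw [show a j * (a k * w) = a k * (a j * w) by rw [← mul_assoc, haa j k, mul_assoc],
      show w * (a k * a j) = w * (a j * a k) by rw [haa k j]]
    module
  have cMpMp : ∀ j k, Commute (Mp j) (Mp k) := by
    intro j k
    apply LinearMap.ext; intro w
    rw [Module.End.mul_apply, Module.End.mul_apply]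
    simp only [hMp, mul_add, add_mul, mul_smul_comm, smul_mul_assoc, smul_add, smul_smul,
      mul_assoc]
    rw [show ap j * (ap k * w) = ap k * (ap j * w) by rw [← mul_assoc, hpp j k, mul_assoc],
      show w * (ap k * ap j) = w * (ap j * ap k) by rw [hpp k j]]
    module
  have cMpM : ∀ j k, Commute (Mp j) (M k) := by
    intro j k
    apply LinearMap.ext; intro w
    rw [Module.End.mul_apply, Module.End.mul_apply]
    simp only [hM, hMp, mul_add, add_mul, mul_smul_comm, smul_mul_assoc, smul_add, smul_smul,
      mul_assoc]
    rw [show a k * (ap j * w) = ap j * (a k * w) + if k = j then w else 0 by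
        rw [← mul_assoc, hccr' k j, add_mul, mul_assoc]; split <;> simp,
      show w * (a k * ap j) = w * (ap j * a k) + if k = j then w else 0 by
        rw [hccr' k j, mul_add]; split <;> simp]
    split <;> module
  have hXmul : ∀ (i : Fin d ⊕ Fin d) (p : MvPolynomial (Fin d ⊕ Fin d) ℂ),
      O (X i * p) = (Sum.elim M Mp i) (O p) := by
    intro i p
    induction p using MvPolynomial.induction_on' with
    | add p r hp hr => simp only [mul_add, map_add, hp, hr]
    | monomial m c =>
      have hm : (X i : MvPolynomial (Fin d ⊕ Fin d) ℂ) * monomial m c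
          = monomial (Finsupp.single i 1 + m) c := by
        rw [monomial_single_add, pow_one]
      have hc : ∀ (m' : (Fin d ⊕ Fin d) →₀ ℕ),
          (monomial m' c : MvPolynomial (Fin d ⊕ Fin d) ℂ) = c • monomial m' 1 := by
        intro m'; rw [smul_monomial, smul_eq_mul, mul_one]
      cases i with
      | inl j =>
        have hfst : (List.ofFn fun k : Fin d =>
              M k ^ (Finsupp.single (Sum.inl j) 1 + m : (Fin d ⊕ Fin d) →₀ ℕ) (Sum.inl k)).prod
            = M j * (List.ofFn fun k : Fin d => M k ^ m (Sum.inl k)).prod := by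
          rw [show (fun k : Fin d =>
                M k ^ (Finsupp.single (Sum.inl j) 1 + m : (Fin d ⊕ Fin d) →₀ ℕ) (Sum.inl k))
              = Function.update (fun k : Fin d => M k ^ m (Sum.inl k)) j
                (M j * (fun k : Fin d => M k ^ m (Sum.inl k)) j) from ?_]
          · exact listpull_aux d _ j (M j) (fun k => (cMM j k).pow_right _)
          · funext k
            rcases eq_or_ne k j with rfl | hk
            · rw [Function.update_self]
              simp [Finsupp.add_apply, Finsupp.single_apply, add_comm 1, pow_succ']
            · simp [Function.update_of_ne hk, Finsupp.add_apply, Finsupp.single_apply,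
                Ne.symm hk]
        have hsnd : (fun k : Fin d =>
              Mp k ^ (Finsupp.single (Sum.inl j) 1 + m : (Fin d ⊕ Fin d) →₀ ℕ) (Sum.inr k))
            = fun k : Fin d => Mp k ^ m (Sum.inr k) := by
          funext k; simp [Finsupp.add_apply, Finsupp.single_apply]
        rw [hm, hc, hc, map_smul, map_smul, hO, hO, map_smul, Sum.elim_inl, hfst, hsnd,
          mul_assoc, Module.End.mul_apply]
      | inr j =>
        have hfst : (fun k : Fin d =>
              M k ^ (Finsupp.single (Sum.inr j) 1 + m : (Fin d ⊕ Fin d) →₀ ℕ) (Sum.inl k))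
            = fun k : Fin d => M k ^ m (Sum.inl k) := by
          funext k; simp [Finsupp.add_apply, Finsupp.single_apply]
        have hsnd : (List.ofFn fun k : Fin d =>
              Mp k ^ (Finsupp.single (Sum.inr j) 1 + m : (Fin d ⊕ Fin d) →₀ ℕ) (Sum.inr k)).prod
            = Mp j * (List.ofFn fun k : Fin d => Mp k ^ m (Sum.inr k)).prod := by
          rw [show (fun k : Fin d =>
                Mp k ^ (Finsupp.single (Sum.inr j) 1 + m : (Fin d ⊕ Fin d) →₀ ℕ) (Sum.inr k))
              = Function.update (fun k : Fin d => Mp k ^ m (Sum.inr k)) j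
                (Mp j * (fun k : Fin d => Mp k ^ m (Sum.inr k)) j) from ?_]
          · exact listpull_aux d _ j (Mp j) (fun k => (cMpMp j k).pow_right _)
          · funext k
            rcases eq_or_ne k j with rfl | hk
            · rw [Function.update_self]
              simp [Finsupp.add_apply, Finsupp.single_apply, add_comm 1, pow_succ']
            · simp [Function.update_of_ne hk, Finsupp.add_apply, Finsupp.single_apply,
                Ne.symm hk]
        have hcomm : Commute (Mp j) (List.ofFn fun k : Fin d => M k ^ m (Sum.inl k)).prod := by
          apply Commute.list_prod_right
          intro x hx
          rw [List.mem_ofFn] at hx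
          obtain ⟨k, rfl⟩ := hx
          exact (cMpM j k).pow_right _
        rw [hm, hc, hc, map_smul, map_smul, hO, hO, map_smul, Sum.elim_inr, hfst, hsnd,
          ← mul_assoc, ← hcomm.eq, mul_assoc, Module.End.mul_apply]
  intro p j
  induction p using MvPolynomial.induction_on with
  | C c =>
    have h1 : (C c : MvPolynomial (Fin d ⊕ Fin d) ℂ) = c • monomial 0 1 := by
      rw [smul_monomial, smul_eq_mul, mul_one, monomial_zero']
    have hO1 : O (C c) = c • (1 : W) := by
      rw [h1, map_smul, hO 0]
      simp
    constructor <;>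
      simp [pderiv_C, hO1, mul_smul_comm, smul_mul_assoc]
  | add p r hp hr =>
    constructor
    · rw [map_add, map_add, map_add, hp.1, hr.1, mul_add, add_mul]; abel
    · rw [map_add, map_add, map_add, hp.2, hr.2, mul_add, add_mul]; abel
  | mul_X p i hp =>
    have key : ∀ (k : Fin d ⊕ Fin d),
        O (pderiv k (p * X i)) = (Sum.elim M Mp i) (O (pderiv k p)) +
          if i = k then O p else 0 := by
      intro k
      rw [pderiv_mul, map_add, mul_comm (pderiv k p), hXmul]
      congr 1
      rcases eq_or_ne i k with rfl | h
      · simp [pderiv_X_self]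
      · simp [pderiv_X_of_ne h, h]
    have hOmul : O (p * X i) = (Sum.elim M Mp i) (O p) := by
      rw [mul_comm, hXmul]
    constructor
    · rw [key, hOmul]
      cases i with
      | inl k =>
        simp only [Sum.elim_inl]
        rw [hp.1, swapA_M j k (O p)]
        simp
      | inr k =>
        simp only [Sum.elim_inr]
        rw [hp.1, swapA_Mp j k (O p)]
        rcases eq_or_ne j k with rfl | h
        · simp
        · simp [h, Ne.symm h]
    · rw [key, hOmul]
      cases i with
      | inl k =>
        simp only [Sum.elim_inl]
        rw [hp.2, swapB_M j k (O p)]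
        rcases eq_or_ne j k with rfl | h
        · simp [map_neg]
          abel
        · simp [h, Ne.symm h, map_neg]
      | inr k =>
        simp only [Sum.elim_inr]
        rw [hp.2, swapB_Mp j k (O p)]
        simp [map_neg]
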